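/- arXiv:1905.08928 — 4 statements merged into one kernel-verified Lean document; each statement's English description precedes it below -/
import Mathlib

section
/- If c > 0, λ ≥ 0 and −c ≤ x ≤ c, then e^{λx} ≤ (x/(2c))·(e^{λc} − e^{−λc}) + e^{(λc)²/2}. -/
theorem exp_convexity_bound (c lam x : ℝ) (hc : 0 < c) (hlam : 0 ≤ lam)
    (hx1 : -c ≤ x) (hx2 : x ≤ c) :
    Real.exp (lam * x) ≤
      x / (2 * c) * (Real.exp (lam * c) - Real.exp (-(lam * c))) +
        Real.exp ((lam * c) ^ 2 / 2) := by
  have h2c : (0:ℝ) < 2 * c := by linarith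
  have ha : 0 ≤ (c - x) / (2 * c) := by
    apply div_nonneg <;> linarith
  have hb : 0 ≤ (x + c) / (2 * c) := by
    apply div_nonneg <;> linarith
  have hab : (c - x) / (2 * c) + (x + c) / (2 * c) = 1 := by
    field_simp; ring
  have hconv := convexOn_exp.2 (Set.mem_univ (-(lam * c))) (Set.mem_univ (lam * c))
    ha hb hab
  simp only [smul_eq_mul] at hconv
  have hpt : (c - x) / (2 * c) * (-(lam * c)) + (x + c) / (2 * c) * (lam * c) = lam * x := by
    rw [div_mul_eq_mul_div, div_mul_eq_mul_div, ← add_div, div_eq_iff h2c.ne']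
    ring
  rw [hpt] at hconv
  have hcosh : Real.cosh (lam * c) ≤ Real.exp ((lam * c) ^ 2 / 2) :=
    Real.cosh_le_exp_half_sq _
  rw [Real.cosh_eq] at hcosh
  have : x / (2 * c) * (Real.exp (lam * c) - Real.exp (-(lam * c))) +
      (Real.exp (lam * c) + Real.exp (-(lam * c))) / 2 =
      (c - x) / (2 * c) * Real.exp (-(lam * c)) + (x + c) / (2 * c) * Real.exp (lam * c) := by
    field_simp; ring
  linarith
end

section
/- Let X be a random variable and F a sub-σ-field with E(X | F) = 0 and |X| ≤ c almost surely, and let λ ≥ 0. Then E(e^{λX} | F) ≤ e^{(λc)²/2} almost surely. -/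
open MeasureTheory Real

lemma exp_le_cosh_add {c x lam : ℝ} (hc : 0 < c) (hx : |x| ≤ c) :
    Real.exp (lam * x) ≤ Real.cosh (lam * c) + (Real.sinh (lam * c) / c) * x := by
  obtain ⟨hx1, hx2⟩ := abs_le.mp hx
  set p : ℝ := (c - x) / (2 * c) with hp
  set q : ℝ := (c + x) / (2 * c) with hq
  have hp0 : 0 ≤ p := div_nonneg (by linarith) (by linarith)
  have hq0 : 0 ≤ q := div_nonneg (by linarith) (by linarith)
  have hpq : p + q = 1 := by rw [hp, hq]; field_simp; ring
  have h := convexOn_exp.2 (Set.mem_univ (-(lam * c))) (Set.mem_univ (lam * c)) hp0 hq0 hpq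
  simp only [smul_eq_mul] at h
  have harg : p * -(lam * c) + q * (lam * c) = lam * x := by
    rw [hp, hq]; field_simp; ring
  rw [harg] at h
  calc Real.exp (lam * x) ≤ p * Real.exp (-(lam * c)) + q * Real.exp (lam * c) := h
    _ = Real.cosh (lam * c) + (Real.sinh (lam * c) / c) * x := by
        rw [Real.cosh_eq, Real.sinh_eq, hp, hq]
        field_simp; ring

theorem conditional_hoeffding {Ω : Type*} {m0 : MeasurableSpace Ω} {μ : Measure Ω}
    [IsProbabilityMeasure μ] (m' : MeasurableSpace Ω) (hm' : m' ≤ m0)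
    (X : Ω → ℝ) (hint : Integrable X μ)
    (c : ℝ) (hc : 0 < c) (lam : ℝ) (hlam : 0 ≤ lam)
    (hcond : μ[X | m'] =ᵐ[μ] 0)
    (hbdd : ∀ᵐ ω ∂μ, |X ω| ≤ c) :
    ∀ᵐ ω ∂μ, (μ[fun ω' => Real.exp (lam * X ω') | m']) ω ≤ Real.exp ((lam * c) ^ 2 / 2) := by
  set t : ℝ := lam * c with ht
  -- integrability of exp(lam * X)
  have hmeas : AEStronglyMeasurable (m := m0) (fun ω => Real.exp (lam * X ω)) μ :=
    (Real.continuous_exp.comp (continuous_const.mul continuous_id)).comp_aestronglyMeasurable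
      hint.aestronglyMeasurable
  have hintexp : Integrable (fun ω => Real.exp (lam * X ω)) μ := by
    refine Integrable.mono' (integrable_const (Real.exp (lam * c))) hmeas ?_
    filter_upwards [hbdd] with ω hω
    rw [Real.norm_eq_abs, abs_of_pos (Real.exp_pos _)]
    exact Real.exp_le_exp.mpr (mul_le_mul_of_nonneg_left (le_of_abs_le hω) hlam)
  -- the dominating function
  set g : Ω → ℝ := fun ω => Real.cosh t + (Real.sinh t / c) * X ω with hg
  have hintg : Integrable g μ := (integrable_const _).add (hint.const_mul _)
  have hle : (fun ω => Real.exp (lam * X ω)) ≤ᵐ[μ] g := by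
    filter_upwards [hbdd] with ω hω
    exact exp_le_cosh_add hc hω
  have h1 : μ[fun ω' => Real.exp (lam * X ω') | m'] ≤ᵐ[μ] μ[g | m'] :=
    condExp_mono hintexp hintg hle
  have h2 : μ[g | m'] =ᵐ[μ] fun _ => Real.cosh t := by
    have hadd : μ[g | m'] =ᵐ[μ]
        μ[(fun _ => Real.cosh t) | m'] + μ[(fun ω => (Real.sinh t / c) * X ω) | m'] :=
      condExp_add (integrable_const _) (hint.const_mul _) m'
    have hsmul : μ[(fun ω => (Real.sinh t / c) * X ω) | m'] =ᵐ[μ]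
        (Real.sinh t / c) • μ[X | m'] := condExp_smul (Real.sinh t / c) X m'
    refine hadd.trans ?_
    have hconst : μ[(fun _ => Real.cosh t) | m'] = fun _ => Real.cosh t :=
      condExp_const hm' _
    rw [hconst]
    filter_upwards [hsmul, hcond] with ω hω hω'
    simp only [Pi.add_apply, hω, Pi.smul_apply, hω', Pi.zero_apply, smul_eq_mul,
      mul_zero, add_zero]
  filter_upwards [h1, h2] with ω hω hω'
  calc (μ[fun ω' => Real.exp (lam * X ω') | m']) ω ≤ (μ[g | m']) ω := hω
    _ = Real.cosh t := hω'
    _ ≤ Real.exp (t ^ 2 / 2) := Real.cosh_le_exp_half_sq t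
end

section
/- Let (M_i)_{0 ≤ i ≤ m} be a martingale with M_0 = 0, increments bounded by |M_{i+1} − M_i| ≤ 2β, and conditional variances Var(M_{i+1} − M_i | F_i) ≤ βb. Then for all t ≥ 0, P(max_{0 ≤ j ≤ m} |M_j| ≥ t) ≤ 2·e^{−t²/(2mβb + 2βt)}. -/
open MeasureTheory Real

lemma exp_tsum (x : ℝ) : Real.exp x = ∑' n : ℕ, x ^ n / n.factorial := by
  rw [Real.exp_eq_exp_ℝ, NormedSpace.exp_eq_tsum_div]

lemma summable_shift (x : ℝ) (k : ℕ) :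
    Summable (fun n : ℕ => x ^ (n + k) / (n + k).factorial) :=
  (summable_nat_add_iff k).2 (Real.summable_pow_div_factorial x)

lemma exp_sub_tsum (x : ℝ) :
    Real.exp x - 1 - x = ∑' n : ℕ, x ^ (n + 2) / (n + 2).factorial := by
  have hs : Summable (fun n : ℕ => x ^ n / n.factorial) := Real.summable_pow_div_factorial x
  have h1 := Summable.tsum_eq_zero_add hs
  have h2 := Summable.tsum_eq_zero_add (summable_shift x 1)
  rw [exp_tsum, h1, h2]
  norm_num

lemma quad_le_exp {x : ℝ} (hx : 0 ≤ x) : 1 + x + x ^ 2 / 2 ≤ Real.exp x := by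
  have h := exp_sub_tsum x
  have hterm : x ^ (0 + 2) / ((0:ℕ) + 2).factorial ≤ ∑' n : ℕ, x ^ (n + 2) / (n + 2).factorial :=
    Summable.le_tsum (summable_shift x 2) 0 (fun i _ => by positivity)
  norm_num at hterm
  nlinarith [hterm]

lemma exp_le_quad_of_nonpos {x : ℝ} (hx : x ≤ 0) : Real.exp x ≤ 1 + x + x ^ 2 / 2 := by
  set y := -x with hy
  have hy0 : 0 ≤ y := by linarith
  have h1 : 1 + y + y ^ 2 / 2 ≤ Real.exp y := quad_le_exp hy0
  have h2 : Real.exp x = (Real.exp y)⁻¹ := by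
    rw [hy, Real.exp_neg]; simp
  have hpos : 0 < 1 + y + y ^ 2 / 2 := by nlinarith
  have h3 : (Real.exp y)⁻¹ ≤ (1 + y + y ^ 2 / 2)⁻¹ := by
    apply inv_anti₀ hpos h1
  have h4 : (1 + y + y ^ 2 / 2)⁻¹ ≤ 1 - y + y ^ 2 / 2 := by
    rw [inv_le_iff_one_le_mul₀ hpos]  -- guess
    nlinarith
  have : 1 - y + y ^ 2 / 2 = 1 + x + x ^ 2 / 2 := by rw [hy]; ring
  linarith [h2 ▸ le_trans h3 (h4.trans_eq this)]

lemma mono_ratio {x u : ℝ} (hx : 0 ≤ x) (hxu : x ≤ u) :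
    u ^ 2 * (Real.exp x - 1 - x) ≤ x ^ 2 * (Real.exp u - 1 - u) := by
  rw [exp_sub_tsum, exp_sub_tsum, ← tsum_mul_left, ← tsum_mul_left]
  apply Summable.tsum_le_tsum _ ((summable_shift x 2).mul_left _) ((summable_shift u 2).mul_left _)
  intro n
  rw [div_eq_mul_inv, div_eq_mul_inv, ← mul_assoc, ← mul_assoc]
  apply mul_le_mul_of_nonneg_right _ (by positivity)
  calc u ^ 2 * x ^ (n + 2) = (u ^ 2 * x ^ 2) * x ^ n := by ring
    _ ≤ (u ^ 2 * x ^ 2) * u ^ n := by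
        apply mul_le_mul_of_nonneg_left (pow_le_pow_left₀ hx hxu n) (by positivity)
    _ = x ^ 2 * u ^ (n + 2) := by ring

lemma key_exp_bound {u x : ℝ} (hu : 0 < u) (hx : x ≤ u) :
    Real.exp x ≤ 1 + x + x ^ 2 * ((Real.exp u - 1 - u) / u ^ 2) := by
  have hgu : 1 / 2 ≤ (Real.exp u - 1 - u) / u ^ 2 := by
    rw [le_div_iff₀ (by positivity)]
    nlinarith [quad_le_exp hu.le]
  rcases le_or_gt x 0 with h | h
  · have := exp_le_quad_of_nonpos h
    nlinarith [sq_nonneg x]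
  · have := mono_ratio h.le hx
    have h2 : Real.exp x - 1 - x ≤ x ^ 2 * ((Real.exp u - 1 - u) / u ^ 2) := by
      rw [mul_div_assoc', le_div_iff₀ (by positivity)]
      nlinarith
    linarith


lemma log_lower {w : ℝ} (hw : 0 ≤ w) : 2 * w / (2 + w) ≤ Real.log (1 + w) := by
  set f : ℝ → ℝ := fun w => Real.log (1 + w) - 2 * w / (2 + w) with hf
  have hderiv : ∀ x : ℝ, 0 ≤ x → HasDerivAt f (1 / (1 + x) - 4 / (2 + x) ^ 2) x := by
    intro x hx
    have h1 : (1:ℝ) + x ≠ 0 := by positivity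
    have h2 : (2:ℝ) + x ≠ 0 := by positivity
    have hlog : HasDerivAt (fun y : ℝ => Real.log (1 + y)) (1 / (1 + x)) x := by
      have := ((hasDerivAt_id x).const_add 1).log h1
      simpa using this
    have hrat : HasDerivAt (fun y : ℝ => 2 * y / (2 + y)) (4 / (2 + x) ^ 2) x := by
      have hn : HasDerivAt (fun y : ℝ => 2 * y) 2 x := by
        simpa using (hasDerivAt_id x).const_mul (2:ℝ)
      have hd : HasDerivAt (fun y : ℝ => 2 + y) 1 x := (hasDerivAt_id x).const_add 2
      have := hn.div hd h2
      exact this.congr_deriv (by ring)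
    exact hlog.sub hrat
  have hmono : MonotoneOn f (Set.Ici 0) := by
    apply monotoneOn_of_deriv_nonneg (convex_Ici 0)
    · intro x hx
      exact ((hderiv x hx).continuousAt).continuousWithinAt
    · intro x hx
      rw [interior_Ici] at hx
      exact ((hderiv x (le_of_lt hx)).differentiableAt).differentiableWithinAt
    · intro x hx
      rw [interior_Ici] at hx
      rw [(hderiv x (le_of_lt hx)).deriv]
      have h1 : (0:ℝ) < 1 + x := by linarith [(Set.mem_Ioi.mp hx).le]
      have h2 : (0:ℝ) < 2 + x := by linarith [(Set.mem_Ioi.mp hx).le]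
      rw [sub_nonneg, div_le_div_iff₀ (by positivity) h1]
      nlinarith [sq_nonneg x]
  have h0 : f 0 = 0 := by simp [hf]
  have := hmono (Set.self_mem_Ici) hw hw
  rw [h0] at this
  simp only [hf] at this
  linarith


section
variable {Ω : Type*} {m0 : MeasurableSpace Ω} {μ : Measure Ω}

lemma one_sided [IsProbabilityMeasure μ] (ℱ : Filtration ℕ m0) (M : ℕ → Ω → ℝ)
    (hmart : Martingale M ℱ μ)
    (m : ℕ) (β b : ℝ) (hβ : 0 < β) (hb : 0 < b)
    (h0 : ∀ ω, M 0 ω = 0)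
    (hbdd : ∀ i < m, ∀ᵐ ω ∂μ, |M (i + 1) ω - M i ω| ≤ 2 * β)
    (hvar : ∀ i < m, ∀ᵐ ω ∂μ,
      (μ[fun ω' => (M (i + 1) ω' - M i ω') ^ 2 | ℱ i]) ω ≤ β * b)
    (t l : ℝ) (ht : 0 < t) (hl : 0 < l) :
    μ {ω | ∃ j ≤ m, t ≤ M j ω} ≤ ENNReal.ofReal (Real.exp
      (m * ((Real.exp (2 * β * l) - 1 - 2 * β * l) / (2 * β) ^ 2 * (β * b)) - l * t)) := by
  set G : ℝ := (Real.exp (2 * β * l) - 1 - 2 * β * l) / (2 * β) ^ 2 with hG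
  set K : ℝ := G * (β * b) with hK
  have hu : 0 < 2 * β * l := by positivity
  have hGnn : 0 ≤ G := by
    rw [hG]
    apply div_nonneg _ (by positivity)
    nlinarith [Real.add_one_le_exp (2 * β * l)]
  have hKnn : 0 ≤ K := by rw [hK]; positivity
  -- boundedness of M
  have hMb : ∀ j, j ≤ m → ∀ᵐ ω ∂μ, |M j ω| ≤ 2 * β * j := by
    intro j
    induction j with
    | zero => intro _; filter_upwards with ω; simp [h0]
    | succ n ih =>
      intro hn
      filter_upwards [ih (le_of_lt (Nat.lt_of_succ_le hn)), hbdd n (Nat.lt_of_succ_le hn)]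
        with ω h1 h2
      have : |M (n + 1) ω| ≤ |M n ω| + |M (n + 1) ω - M n ω| := by
        calc |M (n + 1) ω| = |M n ω + (M (n + 1) ω - M n ω)| := by ring_nf
          _ ≤ _ := abs_add_le _ _
      push_cast
      linarith
  set F : ℕ → Ω → ℝ := fun j ω => Real.exp (l * M (min j m) ω) with hF
  have hFmeas : ∀ j, StronglyMeasurable[ℱ j] (F j) := by
    intro j
    exact (Real.continuous_exp.comp_stronglyMeasurable
      (((hmart.stronglyAdapted (min j m)).mono (ℱ.mono (min_le_left j m))).const_mul l))
  have hFbd : ∀ j, ∀ᵐ ω ∂μ, F j ω ≤ Real.exp (l * (2 * β * m)) := by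
    intro j
    filter_upwards [hMb (min j m) (min_le_right j m)] with ω hω
    apply Real.exp_le_exp.2
    have h1 : M (min j m) ω ≤ 2 * β * m := by
      have := le_trans (le_abs_self _) hω
      have h2 : ((min j m : ℕ) : ℝ) ≤ (m : ℝ) := Nat.cast_le.2 (min_le_right j m)
      nlinarith [hβ]
    nlinarith [hl]
  have hFint : ∀ j, Integrable (F j) μ := by
    intro j
    refine Integrable.mono' (integrable_const (Real.exp (l * (2 * β * m))))
      (((hFmeas j).mono (ℱ.le j)).aestronglyMeasurable) ?_
    filter_upwards [hFbd j] with ω hω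
    rw [Real.norm_eq_abs, abs_of_pos (Real.exp_pos _)]
    exact hω
  have SM : ∀ k, StronglyMeasurable (M k) := fun k => (hmart.stronglyAdapted k).mono (ℱ.le k)
  have hstep : ∀ n, n < m →
      (μ[F (n + 1)|ℱ n] =ᵐ[μ] F n * μ[(fun ω => Real.exp (l * ((M (n+1) - M n) ω)))|ℱ n])
      ∧ (μ[(fun ω => Real.exp (l * ((M (n+1) - M n) ω)))|ℱ n] ≤ᵐ[μ] fun _ => Real.exp K)
      ∧ ((fun _ : Ω => (1:ℝ)) ≤ᵐ[μ] μ[(fun ω => Real.exp (l * ((M (n+1) - M n) ω)))|ℱ n]) := by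
    intro n hn
    have hv := hvar n hn
    set D : Ω → ℝ := M (n + 1) - M n with hD
    set D2 : Ω → ℝ := fun ω' => (M (n + 1) ω' - M n ω') ^ 2 with hD2
    set E : Ω → ℝ := fun ω => Real.exp (l * D ω) with hE
    have hDapp : ∀ ω, D ω = M (n + 1) ω - M n ω := fun ω => rfl
    have hDint : Integrable D μ := (hmart.integrable (n + 1)).sub (hmart.integrable n)
    have hDmeas : StronglyMeasurable D := (SM (n + 1)).sub (SM n)
    have hD2meas : StronglyMeasurable D2 := by
      have h : D2 = fun ω' => (M (n + 1) ω' - M n ω') * (M (n + 1) ω' - M n ω') := by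
        funext ω'; rw [hD2]; ring
      rw [h]
      exact ((SM (n + 1)).sub (SM n)).mul ((SM (n + 1)).sub (SM n))
    have hD2int : Integrable D2 μ := by
      refine Integrable.mono' (integrable_const ((2 * β) ^ 2)) hD2meas.aestronglyMeasurable ?_
      filter_upwards [hbdd n hn] with ω hω
      rw [Real.norm_eq_abs, hD2]
      rw [abs_of_nonneg (sq_nonneg _)]
      calc (M (n + 1) ω - M n ω) ^ 2 = |M (n + 1) ω - M n ω| ^ 2 := (sq_abs _).symm
        _ ≤ (2 * β) ^ 2 := by nlinarith [abs_nonneg (M (n + 1) ω - M n ω)]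
    have hEmeas : StronglyMeasurable E :=
      Real.continuous_exp.comp_stronglyMeasurable (hDmeas.const_mul l)
    have hEint : Integrable E μ := by
      refine Integrable.mono' (integrable_const (Real.exp (2 * β * l)))
        hEmeas.aestronglyMeasurable ?_
      filter_upwards [hbdd n hn] with ω hω
      rw [Real.norm_eq_abs, abs_of_pos (Real.exp_pos _)]
      apply Real.exp_le_exp.2
      have := le_trans (le_abs_self _) hω
      rw [hDapp ω]
      nlinarith
    have hD0 : μ[D|ℱ n] =ᵐ[μ] 0 := by
      have h1 := condExp_sub (μ := μ) (m := ℱ n)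
        (hmart.integrable (n + 1)) (hmart.integrable n)
      have h2 := hmart.condExp_ae_eq (Nat.le_succ n)
      have h3 := hmart.condExp_ae_eq (le_refl n)
      rw [hD]
      filter_upwards [h1, h2, h3] with ω e1 e2 e3
      simp only [Pi.sub_apply, Pi.zero_apply] at *
      rw [e1, e2, e3, sub_self]
    have hcadd : μ[((fun _ => (1:ℝ)) + l • D) + G • D2|ℱ n]
        =ᵐ[μ] fun ω => 1 + l * (μ[D|ℱ n]) ω + G * (μ[D2|ℱ n]) ω := by
      have ha := condExp_add (μ := μ) (m := ℱ n)
        ((integrable_const (1:ℝ)).add (hDint.smul l)) (hD2int.smul G)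
      have hb := condExp_add (μ := μ) (m := ℱ n) (integrable_const (1:ℝ)) (hDint.smul l)
      have hc := condExp_smul (μ := μ) (m := ℱ n) l D
      have hd := condExp_smul (μ := μ) (m := ℱ n) G D2
      have he : μ[(fun _ => (1:ℝ))|ℱ n] = fun _ => (1:ℝ) := condExp_const (ℱ.le n) 1
      filter_upwards [ha, hb, hc, hd] with ω e1 e2 e3 e4
      simp only [Pi.add_apply, Pi.smul_apply, smul_eq_mul] at *
      rw [e1, e2, e3, e4, he]
    have hlin0 : ((fun _ => (1:ℝ)) + l • D) ≤ᵐ[μ] E := by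
      filter_upwards with ω
      simp only [Pi.add_apply, Pi.smul_apply, smul_eq_mul, hE]
      exact Real.add_one_le_exp (l * D ω) |>.trans_eq' (by ring)
    refine ⟨?_, ?_, ?_⟩
    · -- pull out
      have hmin1 : min (n + 1) m = n + 1 := min_eq_left (Nat.succ_le_of_lt hn)
      have hminn : min n m = n := min_eq_left (le_of_lt hn)
      have hsplit : F (n + 1) = F n * E := by
        funext ω
        simp only [hF, hE, hmin1, hminn, Pi.mul_apply, hDapp ω, ← Real.exp_add]
        ring_nf
      have hFEint : Integrable (F n * E) μ := by rw [← hsplit]; exact hFint (n + 1)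
      have := condExp_mul_of_stronglyMeasurable_left (hFmeas n) hFEint hEint
      rw [hsplit]
      exact this
    · -- upper bound
      have hpt : E ≤ᵐ[μ] ((fun _ => (1:ℝ)) + l • D) + G • D2 := by
        filter_upwards [hbdd n hn] with ω hω
        have hx : l * D ω ≤ 2 * β * l := by
          have := le_trans (le_abs_self _) hω
          rw [hDapp ω]; nlinarith
        have hkey := key_exp_bound hu hx
        have halg : (l * D ω) ^ 2 * ((Real.exp (2 * β * l) - 1 - 2 * β * l) / (2 * β * l) ^ 2)
            = G * D2 ω := by
          rw [hG, hD2, hDapp ω]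
          have hl' : l ≠ 0 := ne_of_gt hl
          have hβ' : β ≠ 0 := ne_of_gt hβ
          field_simp
        simp only [Pi.add_apply, Pi.smul_apply, smul_eq_mul, hE]
        linarith [hkey, halg.le, halg.ge]
      have h2 := condExp_mono (m := ℱ n) hEint
        (((integrable_const (1:ℝ)).add (hDint.smul l)).add (hD2int.smul G)) hpt
      filter_upwards [h2, hcadd, hD0, hv] with ω e1 e2 e3 e4
      rw [e2] at e1
      simp only [Pi.zero_apply] at e3
      rw [e3] at e1
      have : (μ[E|ℱ n]) ω ≤ 1 + G * (β * b) := by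
        have := mul_le_mul_of_nonneg_left e4 hGnn
        linarith
      calc (μ[E|ℱ n]) ω ≤ 1 + G * (β * b) := this
        _ ≤ Real.exp (G * (β * b)) := by linarith [Real.add_one_le_exp (G * (β * b))]
        _ = Real.exp K := by rw [hK]
    · -- lower bound 1
      have h2 := condExp_mono (m := ℱ n) ((integrable_const (1:ℝ)).add (hDint.smul l)) hEint hlin0
      have hlin : μ[(fun _ => (1:ℝ)) + l • D|ℱ n] =ᵐ[μ] fun _ => (1:ℝ) := by
        have hb := condExp_add (μ := μ) (m := ℱ n) (integrable_const (1:ℝ)) (hDint.smul l)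
        have hc := condExp_smul (μ := μ) (m := ℱ n) l D
        have he : μ[(fun _ => (1:ℝ))|ℱ n] = fun _ => (1:ℝ) := condExp_const (ℱ.le n) 1
        filter_upwards [hb, hc, hD0] with ω e1 e2 e3
        simp only [Pi.add_apply, Pi.smul_apply, smul_eq_mul, Pi.zero_apply] at *
        rw [e1, e2, e3, he]
        simp
      filter_upwards [h2, hlin] with ω e1 e2
      rw [e2] at e1
      exact e1
  have hsub : Submartingale F ℱ μ := by
    refine submartingale_nat (fun j => hFmeas j) hFint ?_
    intro n
    rcases lt_or_ge n m with hn | hn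
    · obtain ⟨hpull, -, hone⟩ := hstep n hn
      refine Filter.EventuallyLE.trans ?_ hpull.symm.le
      filter_upwards [hone] with ω h1
      simp only [Pi.mul_apply]
      nlinarith [Real.exp_pos (l * M (min n m) ω), h1]
    · have heq : F (n + 1) = F n := by
        funext ω
        simp only [hF]
        rw [min_eq_right (le_trans hn (Nat.le_succ n)), min_eq_right hn]
      rw [heq, condExp_of_stronglyMeasurable (ℱ.le n) (hFmeas n) (hFint n)]
  have hgrow : ∀ n, n ≤ m → ∫ ω, F n ω ∂μ ≤ Real.exp (n * K) := by
    intro n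
    induction n with
    | zero =>
      intro _
      have h1 : F 0 = fun _ => 1 := by
        funext ω
        simp [hF, h0]
      rw [h1]
      simp
    | succ n ih =>
      intro hn1
      have hn : n < m := Nat.lt_of_succ_le hn1
      obtain ⟨hpull, hub, -⟩ := hstep n hn
      have e1 : ∫ ω, F (n + 1) ω ∂μ = ∫ ω, (μ[F (n + 1)|ℱ n]) ω ∂μ :=
        (integral_condExp (ℱ.le n)).symm
      have e2 : ∫ ω, (μ[F (n + 1)|ℱ n]) ω ∂μ =
          ∫ ω, (F n * μ[(fun ω => Real.exp (l * ((M (n + 1) - M n) ω)))|ℱ n]) ω ∂μ :=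
        integral_congr_ae hpull
      have e3 : ∫ ω, (F n * μ[(fun ω => Real.exp (l * ((M (n + 1) - M n) ω)))|ℱ n]) ω ∂μ ≤
          ∫ ω, F n ω * Real.exp K ∂μ := by
        refine integral_mono_ae ?_ ((hFint n).mul_const _) ?_
        · refine Integrable.bdd_mul (c := Real.exp (l * (2 * β * m))) integrable_condExp
            (((hFmeas n).mono (ℱ.le n)).aestronglyMeasurable) ?_
          filter_upwards [hFbd n] with ω hω
          rw [Real.norm_eq_abs, abs_of_pos (Real.exp_pos _)]
          exact hω
        · filter_upwards [hub] with ω h1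
          simp only [Pi.mul_apply]
          exact mul_le_mul_of_nonneg_left h1 (Real.exp_pos _).le
      have e4 : ∫ ω, F n ω * Real.exp K ∂μ = (∫ ω, F n ω ∂μ) * Real.exp K :=
        integral_mul_const _ _
      have e5 : (∫ ω, F n ω ∂μ) * Real.exp K ≤ Real.exp (n * K) * Real.exp K := by
        apply mul_le_mul_of_nonneg_right (ih (le_of_lt hn)) (Real.exp_pos _).le
      rw [e1, e2]
      refine le_trans e3 ?_
      rw [e4]
      refine le_trans e5 ?_
      rw [← Real.exp_add]
      apply Real.exp_le_exp.2
      apply le_of_eq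
      push_cast
      ring
  set ε : NNReal := (Real.exp (l * t)).toNNReal with hε
  have hεc : (ε : ℝ) = Real.exp (l * t) := Real.coe_toNNReal _ (Real.exp_pos _).le
  have hmax := maximal_ineq hsub (fun j ω => (Real.exp_pos _).le) (ε := ε) m
  set S := {ω | (ε : ℝ) ≤ (Finset.range (m + 1)).sup' Finset.nonempty_range_add_one
    fun k => F k ω} with hS
  have hsubset : {ω | ∃ j ≤ m, t ≤ M j ω} ⊆ S := by
    rintro ω ⟨j, hj, hjt⟩
    rw [hS, Set.mem_setOf_eq, hεc]
    refine le_trans ?_ (Finset.le_sup' (fun k => F k ω)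
      (Finset.mem_range.2 (Nat.lt_succ_of_le hj)))
    simp only [hF]
    rw [min_eq_left hj]
    exact Real.exp_le_exp.2 (by nlinarith)
  have hof : ENNReal.ofReal (Real.exp (l * t)) = (ε : ENNReal) := by
    rw [hε]; rfl
  calc μ {ω | ∃ j ≤ m, t ≤ M j ω} ≤ μ S := measure_mono hsubset
    _ ≤ ENNReal.ofReal (Real.exp (↑m * K)) / ENNReal.ofReal (Real.exp (l * t)) := by
        rw [ENNReal.le_div_iff_mul_le (Or.inl (by simp [Real.exp_pos]))
          (Or.inl ENNReal.ofReal_ne_top), mul_comm, hof]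
        refine le_trans ?_ (le_trans hmax ?_)
        · exact le_rfl
        · apply ENNReal.ofReal_le_ofReal
          refine le_trans (setIntegral_le_integral (hFint m) ?_) (hgrow m le_rfl)
          filter_upwards with ω
          exact (Real.exp_pos _).le
    _ = ENNReal.ofReal (Real.exp (↑m * K - l * t)) := by
        rw [← ENNReal.ofReal_div_of_pos (Real.exp_pos _), ← Real.exp_sub]

end

theorem freedman_inequality {Ω : Type*} {m0 : MeasurableSpace Ω} {μ : Measure Ω}
    [IsProbabilityMeasure μ] (ℱ : Filtration ℕ m0) (M : ℕ → Ω → ℝ)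
    (hmart : Martingale M ℱ μ)
    (m : ℕ) (hm : 1 ≤ m) (β b : ℝ) (hβ : 0 < β) (hb : 0 < b)
    (h0 : ∀ ω, M 0 ω = 0)
    (hbdd : ∀ i < m, ∀ᵐ ω ∂μ, |M (i + 1) ω - M i ω| ≤ 2 * β)
    (hvar : ∀ i < m, ∀ᵐ ω ∂μ,
      (μ[fun ω' => (M (i + 1) ω' - M i ω') ^ 2 | ℱ i]) ω ≤ β * b)
    (t : ℝ) (ht : 0 ≤ t) :
    μ {ω | ∃ j ≤ m, t ≤ |M j ω|}
      ≤ ENNReal.ofReal (2 * Real.exp (-t ^ 2 / (2 * m * β * b + 2 * β * t))) := by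
  rcases eq_or_lt_of_le ht with h0t | h0t
  · rw [← h0t]
    have he : ENNReal.ofReal (2 * Real.exp (-(0:ℝ) ^ 2 / (2 * m * β * b + 2 * β * 0)))
        = ENNReal.ofReal 2 := by norm_num
    rw [he]
    exact le_trans prob_le_one (ENNReal.one_le_ofReal.2 (by norm_num))
  · have hm1 : (1:ℝ) ≤ (m:ℝ) := by exact_mod_cast hm
    set v : ℝ := m * β * b with hv
    have hvpos : 0 < v := by
      rw [hv]
      nlinarith [mul_pos hβ hb, mul_le_mul_of_nonneg_right hm1 (mul_pos hβ hb).le]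
    set w : ℝ := 2 * β * t / v with hw
    have hwpos : 0 < w := by rw [hw]; positivity
    set L : ℝ := Real.log (1 + w) with hLdef
    have hLpos : 0 < L := Real.log_pos (by linarith)
    set l : ℝ := L / (2 * β) with hldef
    have hlpos : 0 < l := by rw [hldef]; positivity
    have h2bl : 2 * β * l = L := by rw [hldef]; field_simp
    have hexp : Real.exp (2 * β * l) = 1 + w := by
      rw [h2bl, hLdef]; exact Real.exp_log (by linarith)
    have hbddN : ∀ i < m, ∀ᵐ ω ∂μ, |(-M) (i + 1) ω - (-M) i ω| ≤ 2 * β := by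
      intro i hi
      filter_upwards [hbdd i hi] with ω hω
      rw [show (-M) (i + 1) ω - (-M) i ω = -(M (i + 1) ω - M i ω) by
        simp only [Pi.neg_apply]; ring, abs_neg]
      exact hω
    have hvarN : ∀ i < m, ∀ᵐ ω ∂μ,
        (μ[fun ω' => ((-M) (i + 1) ω' - (-M) i ω') ^ 2 | ℱ i]) ω ≤ β * b := by
      intro i hi
      have hfe : (fun ω' => ((-M) (i + 1) ω' - (-M) i ω') ^ 2)
          = fun ω' => (M (i + 1) ω' - M i ω') ^ 2 := by
        funext ω'; simp only [Pi.neg_apply]; ring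
      rw [hfe]
      exact hvar i hi
    have hA := one_sided ℱ M hmart m β b hβ hb h0 hbdd hvar t l h0t hlpos
    have hB := one_sided ℱ (-M) hmart.neg m β b hβ hb
      (by intro ω; simp [h0]) hbddN hvarN t l h0t hlpos
    have hsubU : {ω | ∃ j ≤ m, t ≤ |M j ω|} ⊆
        {ω | ∃ j ≤ m, t ≤ M j ω} ∪ {ω | ∃ j ≤ m, t ≤ (-M) j ω} := by
      rintro ω ⟨j, hj, hjt⟩
      rcases abs_cases (M j ω) with ⟨he, _⟩ | ⟨he, _⟩
      · left; exact ⟨j, hj, by linarith⟩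
      · right
        refine ⟨j, hj, ?_⟩
        simp only [Pi.neg_apply]
        linarith
    have ht_eq : t = w * v / (2 * β) := by rw [hw]; field_simp
    have hkey : w ^ 2 / (2 + w) ≤ (1 + w) * L - w := by
      have hL2 := log_lower hwpos.le
      rw [div_le_iff₀ (by linarith : (0:ℝ) < 2 + w)] at hL2 ⊢
      rw [← hLdef] at hL2
      nlinarith [mul_le_mul_of_nonneg_left hL2 (show (0:ℝ) ≤ 1 + w by linarith)]
    have harith : (m:ℝ) * ((Real.exp (2 * β * l) - 1 - 2 * β * l) / (2 * β) ^ 2 * (β * b))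
        - l * t ≤ -t ^ 2 / (2 * m * β * b + 2 * β * t) := by
      rw [hexp, h2bl]
      have hden : 2 * (m:ℝ) * β * b + 2 * β * t = v * (2 + w) := by
        rw [ht_eq, hv]; field_simp
      rw [hden, hldef, ht_eq]
      have lhs_eq : (m:ℝ) * ((1 + w - 1 - L) / (2 * β) ^ 2 * (β * b))
          - L / (2 * β) * (w * v / (2 * β)) = (v * (w - (1 + w) * L)) / (4 * β ^ 2) := by
        rw [hv]; field_simp; ring
      have rhs_eq : -(w * v / (2 * β)) ^ 2 / (v * (2 + w))
          = (v * (-(w ^ 2 / (2 + w)))) / (4 * β ^ 2) := by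
        field_simp
        ring
      rw [lhs_eq, rhs_eq]
      have h44 : (0:ℝ) < 4 * β ^ 2 := by positivity
      rw [div_le_div_iff₀ h44 h44]
      have hmul := mul_le_mul_of_nonneg_left hkey hvpos.le
      nlinarith [hmul, h44.le]
    calc μ {ω | ∃ j ≤ m, t ≤ |M j ω|}
        ≤ μ ({ω | ∃ j ≤ m, t ≤ M j ω} ∪ {ω | ∃ j ≤ m, t ≤ (-M) j ω}) := measure_mono hsubU
      _ ≤ μ {ω | ∃ j ≤ m, t ≤ M j ω} + μ {ω | ∃ j ≤ m, t ≤ (-M) j ω} := measure_union_le _ _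
      _ ≤ ENNReal.ofReal (Real.exp
            (m * ((Real.exp (2 * β * l) - 1 - 2 * β * l) / (2 * β) ^ 2 * (β * b)) - l * t))
          + ENNReal.ofReal (Real.exp
            (m * ((Real.exp (2 * β * l) - 1 - 2 * β * l) / (2 * β) ^ 2 * (β * b)) - l * t)) :=
          add_le_add hA hB
      _ = ENNReal.ofReal (2 * Real.exp
            (m * ((Real.exp (2 * β * l) - 1 - 2 * β * l) / (2 * β) ^ 2 * (β * b)) - l * t)) := by
          rw [← ENNReal.ofReal_add (Real.exp_pos _).le (Real.exp_pos _).le]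
          ring_nf
      _ ≤ ENNReal.ofReal (2 * Real.exp (-t ^ 2 / (2 * m * β * b + 2 * β * t))) := by
          apply ENNReal.ofReal_le_ofReal
          have := Real.exp_le_exp.2 harith
          linarith
end

section
/- Let Z_k count the indices 0 ≤ i < I (I a stopping time bounded by m) at which |Y_k(i+1) − Y_k(i)| > β, where conditionally P(|Y_k(i+1) − Y_k(i)| > β | F_i) ≤ γ for all i < I. Then Z_k is stochastically dominated by a Binomial(m, γ) random variable: P(Z_k ≥ s) ≤ P(Bin(m, γ) ≥ s) for all s. -/
open MeasureTheory Real

lemma btail_zero (γ : ℝ) (n : ℕ) :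
    ∑ j ∈ Finset.Icc 0 n, (n.choose j : ℝ) * γ ^ j * (1 - γ) ^ (n - j) = 1 := by
  have hIcc : Finset.Icc 0 n = Finset.range (n + 1) := by ext x; simp [Nat.lt_succ_iff]
  calc ∑ j ∈ Finset.Icc 0 n, (n.choose j : ℝ) * γ ^ j * (1 - γ) ^ (n - j)
      = ∑ j ∈ Finset.range (n + 1), γ ^ j * (1 - γ) ^ (n - j) * (n.choose j : ℝ) := by
        rw [hIcc]; exact Finset.sum_congr rfl fun j _ => by ring
    _ = (γ + (1 - γ)) ^ n := (add_pow γ (1 - γ) n).symm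
    _ = 1 := by norm_num

lemma btail_rec (γ : ℝ) (n t : ℕ) :
    ∑ j ∈ Finset.Icc (t + 1) (n + 1), ((n + 1).choose j : ℝ) * γ ^ j * (1 - γ) ^ (n + 1 - j)
      = (1 - γ) * ∑ j ∈ Finset.Icc (t + 1) n, (n.choose j : ℝ) * γ ^ j * (1 - γ) ^ (n - j)
        + γ * ∑ j ∈ Finset.Icc t n, (n.choose j : ℝ) * γ ^ j * (1 - γ) ^ (n - j) := by
  have hmap : ∀ (a : ℕ) (f : ℕ → ℝ), ∑ j ∈ Finset.Icc (a + 1) (n + 1), f j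
      = ∑ k ∈ Finset.Icc a n, f (k + 1) := by
    intro a f
    rw [← Finset.map_add_right_Icc a n 1, Finset.sum_map]
    rfl
  rw [hmap]
  have hsplit : ∀ k ∈ Finset.Icc t n,
      ((n + 1).choose (k + 1) : ℝ) * γ ^ (k + 1) * (1 - γ) ^ (n + 1 - (k + 1))
      = γ * ((n.choose k : ℝ) * γ ^ k * (1 - γ) ^ (n - k))
        + (n.choose (k + 1) : ℝ) * γ ^ (k + 1) * (1 - γ) ^ (n + 1 - (k + 1)) := by
    intro k _
    rw [Nat.choose_succ_succ n k]
    push_cast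
    ring
  rw [Finset.sum_congr rfl hsplit, Finset.sum_add_distrib, ← Finset.mul_sum]
  have h2 : ∑ k ∈ Finset.Icc t n, (n.choose (k + 1) : ℝ) * γ ^ (k + 1) * (1 - γ) ^ (n + 1 - (k + 1))
      = (1 - γ) * ∑ j ∈ Finset.Icc (t + 1) n, (n.choose j : ℝ) * γ ^ j * (1 - γ) ^ (n - j) := by
    rw [← hmap t (fun j => (n.choose j : ℝ) * γ ^ j * (1 - γ) ^ (n + 1 - j))]
    by_cases ht : t ≤ n
    · have hins : Finset.Icc (t + 1) (n + 1) = insert (n + 1) (Finset.Icc (t + 1) n) := by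
        ext x; simp only [Finset.mem_Icc, Finset.mem_insert]; omega
      rw [hins, Finset.sum_insert (by simp)]
      simp only [Nat.choose_succ_self, Nat.cast_zero, zero_mul]
      rw [zero_add, Finset.mul_sum]
      refine Finset.sum_congr rfl fun j hj => ?_
      have hj' : j ≤ n := (Finset.mem_Icc.mp hj).2
      have : n + 1 - j = (n - j) + 1 := by omega
      rw [this]
      ring
    · rw [Finset.Icc_eq_empty (by omega), Finset.Icc_eq_empty (by omega)]
      simp
  rw [h2]
  ring

theorem stochastic_domination_binomial {Ω : Type*} {m0 : MeasurableSpace Ω} {μ : Measure Ω}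
    [IsProbabilityMeasure μ] (ℱ : Filtration ℕ m0)
    (Y : ℕ → Ω → ℝ) (hadapt : Adapted ℱ Y)
    (m : ℕ) (I : Ω → ℕ) (hstop : IsStoppingTime ℱ (fun ω => (I ω : WithTop ℕ))) (hIm : ∀ ω, I ω ≤ m)
    (β : ℝ) (hβ : 0 < β) (γ : ℝ) (hγ0 : 0 ≤ γ) (hγ1 : γ ≤ 1)
    (hcond : ∀ i, ∀ᵐ ω ∂μ, i < I ω →
      (μ[Set.indicator {ω' | β < |Y (i + 1) ω' - Y i ω'|} (fun _ => (1 : ℝ)) | ℱ i]) ω ≤ γ)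
    (Z : Ω → ℕ)
    (hZ : ∀ ω, Z ω = ((Finset.range m).filter
      (fun i => i < I ω ∧ β < |Y (i + 1) ω - Y i ω|)).card) :
    ∀ s : ℕ, μ {ω | s ≤ Z ω}
      ≤ ENNReal.ofReal (∑ j ∈ Finset.Icc s m,
          (m.choose j : ℝ) * γ ^ j * (1 - γ) ^ (m - j)) := by
  classical
  -- the jump sets
  set T : ℕ → Set Ω := fun i => {ω | β < |Y (i + 1) ω - Y i ω|} with hT
  have hTmeas : ∀ i, MeasurableSet[ℱ (i + 1)] (T i) := by
    intro i
    have h1 : Measurable[ℱ (i + 1)] (Y (i + 1)) := hadapt (i + 1)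
    have h2 : Measurable[ℱ (i + 1)] (Y i) :=
      (hadapt i).mono (ℱ.mono (Nat.le_succ i)) le_rfl
    letI : MeasurableSpace Ω := ℱ (i + 1)
    exact measurableSet_lt measurable_const ((h1.sub h2).abs)
  have hTmeas0 : ∀ i, MeasurableSet (T i) := fun i => ℱ.le (i + 1) _ (hTmeas i)
  have hImeas : ∀ i, MeasurableSet[ℱ i] {ω | i < I ω} := by
    intro i
    have h : {ω | i < I ω} = {ω | I ω ≤ i}ᶜ := by ext ω; simp [Set.mem_compl_iff, not_le]
    have h2 : {ω | I ω ≤ i} = {ω | (I ω : WithTop ℕ) ≤ (i : WithTop ℕ)} := by ext ω; simp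
    rw [h, h2]
    exact (hstop i).compl
  -- the counting process
  set N : ℕ → Ω → ℕ := fun n ω => ((Finset.range n).filter
      (fun i => i < I ω ∧ β < |Y (i + 1) ω - Y i ω|)).card with hNdef
  have hNsucc : ∀ n ω, N (n + 1) ω
      = N n ω + (if (n < I ω ∧ β < |Y (n + 1) ω - Y n ω|) then 1 else 0) := by
    intro n ω
    simp only [hNdef, Finset.range_add_one, Finset.filter_insert]
    split_ifs with h
    · rw [Finset.card_insert_of_notMem (by simp)]
    · simp
  have hNmeas : ∀ n, Measurable[ℱ n] (N n) := by
    intro n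
    have hrw : N n = fun ω => ∑ i ∈ Finset.range n,
        if (i < I ω ∧ β < |Y (i + 1) ω - Y i ω|) then 1 else 0 := by
      funext ω; rw [hNdef]; exact Finset.card_filter _ _
    rw [hrw]
    apply Finset.measurable_sum
    intro i hi
    have hi' : i + 1 ≤ n := Finset.mem_range.mp hi
    have hset : MeasurableSet[ℱ n] {ω | i < I ω ∧ β < |Y (i + 1) ω - Y i ω|} := by
      have : {ω | i < I ω ∧ β < |Y (i + 1) ω - Y i ω|} = {ω | i < I ω} ∩ T i := rfl
      rw [this]
      exact ((ℱ.mono (by omega)) _ (hImeas i)).inter ((ℱ.mono hi') _ (hTmeas i))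
    exact Measurable.ite hset measurable_const measurable_const
  have hNmeas0 : ∀ n, Measurable (N n) := fun n => (hNmeas n).mono (ℱ.le n) le_rfl
  -- key conditional bound
  have key : ∀ n (C : Set Ω), MeasurableSet[ℱ n] C →
      μ (C ∩ ({ω | n < I ω} ∩ T n)) ≤ ENNReal.ofReal γ * μ C := by
    intro n C hC
    set D := C ∩ {ω | n < I ω} with hD
    have hDm : MeasurableSet[ℱ n] D := hC.inter (hImeas n)
    have hDm0 : MeasurableSet D := ℱ.le n _ hDm
    set f : Ω → ℝ := Set.indicator {ω' | β < |Y (n + 1) ω' - Y n ω'|} (fun _ => (1 : ℝ)) with hf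
    have hf_int : Integrable f μ := (integrable_const 1).indicator (hTmeas0 n)
    have h1 : ∫ ω in D, f ω ∂μ = (μ (D ∩ T n)).toReal := by
      rw [hf, setIntegral_indicator (hTmeas0 n), setIntegral_const]
      simp
      rfl
    have h2 : ∫ ω in D, (μ[f|ℱ n]) ω ∂μ = ∫ ω in D, f ω ∂μ :=
      setIntegral_condExp (ℱ.le n) hf_int hDm
    have h3 : ∫ ω in D, (μ[f|ℱ n]) ω ∂μ ≤ ∫ ω in D, γ ∂μ := by
      refine setIntegral_mono_ae_restrict integrable_condExp.integrableOn
        (integrableOn_const (measure_ne_top _ _)) ?_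
      have hae : ∀ᵐ ω ∂μ.restrict D, (μ[f|ℱ n]) ω ≤ γ := by
        rw [ae_restrict_iff' hDm0]
        filter_upwards [hcond n] with ω hω hωD
        exact hω hωD.2
      exact hae
    have h4 : (μ (D ∩ T n)).toReal ≤ γ * (μ D).toReal := by
      have := h3
      rw [h2, h1, setIntegral_const] at this
      simpa [mul_comm, Measure.real] using this
    have h5 : μ (D ∩ T n) ≤ ENNReal.ofReal (γ * (μ D).toReal) := by
      rw [← ENNReal.ofReal_toReal (measure_ne_top μ (D ∩ T n))]
      exact ENNReal.ofReal_le_ofReal h4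
    calc μ (C ∩ ({ω | n < I ω} ∩ T n)) = μ (D ∩ T n) := by rw [hD, Set.inter_assoc]
      _ ≤ ENNReal.ofReal (γ * (μ D).toReal) := h5
      _ = ENNReal.ofReal γ * μ D := by
          rw [ENNReal.ofReal_mul hγ0, ENNReal.ofReal_toReal (measure_ne_top μ D)]
      _ ≤ ENNReal.ofReal γ * μ C := by
          exact mul_le_mul_right (measure_mono Set.inter_subset_left) _
  -- nonnegativity of the binomial tails
  have hBnn : ∀ (n s : ℕ), 0 ≤ ∑ j ∈ Finset.Icc s n,
      (n.choose j : ℝ) * γ ^ j * (1 - γ) ^ (n - j) := by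
    intro n s
    refine Finset.sum_nonneg fun j _ => ?_
    have h1γ : (0:ℝ) ≤ 1 - γ := by linarith
    positivity
  -- main induction
  have main : ∀ n s, μ {ω | s ≤ N n ω}
      ≤ ENNReal.ofReal (∑ j ∈ Finset.Icc s n,
          (n.choose j : ℝ) * γ ^ j * (1 - γ) ^ (n - j)) := by
    intro n
    induction n with
    | zero =>
      intro s
      match s with
      | 0 =>
        simp only [hNdef, Finset.range_zero]
        simp [Finset.Icc_self]
      | t + 1 =>
        have : {ω | t + 1 ≤ N 0 ω} = ∅ := by
          ext ω; simp [hNdef]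
        rw [this]
        simp
    | succ n ih =>
      intro s
      match s with
      | 0 =>
        rw [btail_zero, ENNReal.ofReal_one]
        exact prob_le_one
      | t + 1 =>
        have hsplit : {ω | t + 1 ≤ N (n + 1) ω}
            = {ω | t + 1 ≤ N n ω} ∪ ({ω | N n ω = t} ∩ ({ω | n < I ω} ∩ T n)) := by
          ext ω
          simp only [Set.mem_union, Set.mem_inter_iff, Set.mem_setOf_eq, hNsucc n ω]
          by_cases hc : n < I ω ∧ β < |Y (n + 1) ω - Y n ω|
          · rw [if_pos hc]
            constructor
            · intro h
              rcases Nat.lt_or_ge (N n ω) (t + 1) with h' | h'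
              · exact Or.inr ⟨by omega, hc.1, hc.2⟩
              · exact Or.inl h'
            · rintro (h | ⟨h1, -⟩) <;> omega
          · rw [if_neg hc]
            constructor
            · intro h; exact Or.inl (by omega)
            · rintro (h | ⟨h1, h2, h3⟩)
              · omega
              · exact absurd ⟨h2, h3⟩ hc
        have hMt : MeasurableSet[ℱ n] {ω | N n ω = t} :=
          hNmeas n (measurableSet_singleton t)
        have hunion : {ω | t + 1 ≤ N n ω} ∪ {ω | N n ω = t} = {ω | t ≤ N n ω} := by
          ext ω; simp only [Set.mem_union, Set.mem_setOf_eq]; omega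
        have hdisj : Disjoint {ω | t + 1 ≤ N n ω} {ω | N n ω = t} := by
          rw [Set.disjoint_left]
          intro ω h1 h2
          simp only [Set.mem_setOf_eq] at h1 h2
          omega
        have hadd : μ {ω | t + 1 ≤ N n ω} + μ {ω | N n ω = t} = μ {ω | t ≤ N n ω} := by
          rw [← measure_union hdisj (ℱ.le n _ hMt), hunion]
        have hpq : ENNReal.ofReal (1 - γ) + ENNReal.ofReal γ = 1 := by
          rw [← ENNReal.ofReal_add (by linarith) hγ0]
          norm_num
        calc μ {ω | t + 1 ≤ N (n + 1) ω}
            ≤ μ {ω | t + 1 ≤ N n ω} + μ ({ω | N n ω = t} ∩ ({ω | n < I ω} ∩ T n)) := by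
              rw [hsplit]; exact measure_union_le _ _
          _ ≤ μ {ω | t + 1 ≤ N n ω} + ENNReal.ofReal γ * μ {ω | N n ω = t} :=
              add_le_add_right (key n _ hMt) _
          _ = ENNReal.ofReal (1 - γ) * μ {ω | t + 1 ≤ N n ω}
              + ENNReal.ofReal γ * μ {ω | t ≤ N n ω} := by
              rw [← hadd, mul_add, ← add_assoc, ← add_mul, hpq, one_mul]
          _ ≤ ENNReal.ofReal (1 - γ)
                * ENNReal.ofReal (∑ j ∈ Finset.Icc (t + 1) n,
                    (n.choose j : ℝ) * γ ^ j * (1 - γ) ^ (n - j))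
              + ENNReal.ofReal γ
                * ENNReal.ofReal (∑ j ∈ Finset.Icc t n,
                    (n.choose j : ℝ) * γ ^ j * (1 - γ) ^ (n - j)) := by
              exact add_le_add (mul_le_mul_right (ih (t + 1)) _) (mul_le_mul_right (ih t) _)
          _ = ENNReal.ofReal (∑ j ∈ Finset.Icc (t + 1) (n + 1),
                ((n + 1).choose j : ℝ) * γ ^ j * (1 - γ) ^ (n + 1 - j)) := by
              rw [btail_rec γ n t, ENNReal.ofReal_add
                (mul_nonneg (by linarith) (hBnn n (t + 1))) (mul_nonneg hγ0 (hBnn n t)),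
                ENNReal.ofReal_mul (by linarith), ENNReal.ofReal_mul hγ0]
  intro s
  have : {ω | s ≤ Z ω} = {ω | s ≤ N m ω} := by
    ext ω; simp only [Set.mem_setOf_eq, hZ ω, hNdef]
  rw [this]
  exact main m s
end
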